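/- Let (A, Δ, Δ') be a commutative Hopf brace (i.e. the underlying algebra A is commutative) with antipode S for Δ. Then the map ρ: A → A ⊗ A, ρ(a) = S(a_1) a_{21'} ⊗ a_{22'}, makes A a left comodule algebra over (A, Δ'): ρ is a coassociative counital left (A, Δ')-coaction and ρ is an algebra homomorphism, in particular ρ(ab) = ρ(a)ρ(b) and ρ(1) = 1 ⊗ 1. -/

import Mathlib

open TensorProduct

noncomputable section

namespace HopfPaper

/-- A Hopf algebra structure (comultiplication `Δ`, counit `ε`, antipode `S`) on a
given `k`-algebra `H`, expressed in terms of `k`-linear maps.  Together with the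
algebra structure of `H` this is exactly the data of a Hopf algebra
`(H, m, 1, Δ, ε, S)` over the field `k`. -/
structure HopfStruct (k : Type*) [Field k] (H : Type*) [Ring H] [Algebra k H] where
  /-- the comultiplication -/
  Δ : H →ₗ[k] H ⊗[k] H
  /-- the counit -/
  ε : H →ₗ[k] k
  /-- the antipode -/
  S : H →ₗ[k] H
  coassoc : ∀ h : H,
    TensorProduct.map (LinearMap.id : H →ₗ[k] H) Δ (Δ h)
      = TensorProduct.assoc k H H H
          (TensorProduct.map Δ (LinearMap.id : H →ₗ[k] H) (Δ h))
  counit_left : ∀ h : H,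
    TensorProduct.lid k H (TensorProduct.map ε (LinearMap.id : H →ₗ[k] H) (Δ h)) = h
  counit_right : ∀ h : H,
    TensorProduct.rid k H (TensorProduct.map (LinearMap.id : H →ₗ[k] H) ε (Δ h)) = h
  comul_mul : ∀ a b : H, Δ (a * b) = Δ a * Δ b
  comul_one : Δ 1 = 1
  counit_mul : ∀ a b : H, ε (a * b) = ε a * ε b
  counit_one : ε 1 = 1
  antipode_left : ∀ h : H,
    LinearMap.mul' k H (TensorProduct.map S (LinearMap.id : H →ₗ[k] H) (Δ h))
      = algebraMap k H (ε h)
  antipode_right : ∀ h : H,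
    LinearMap.mul' k H (TensorProduct.map (LinearMap.id : H →ₗ[k] H) S (Δ h))
      = algebraMap k H (ε h)

variable (k : Type*) [Field k]

/-- `m ↦ m ⊗ 1`. -/
def ι₁ (M N : Type*) [Ring M] [Algebra k M] [Ring N] [Algebra k N] :
    M →ₗ[k] M ⊗[k] N :=
  (TensorProduct.mk k M N).flip 1

/-- `n ↦ 1 ⊗ n`. -/
def ι₂ (M N : Type*) [Ring M] [Algebra k M] [Ring N] [Algebra k N] :
    N →ₗ[k] M ⊗[k] N :=
  TensorProduct.mk k M N 1

/-- multiplication of three factors, `x ⊗ (y ⊗ z) ↦ x * y * z`. -/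
def mul₃ (T : Type*) [Ring T] [Algebra k T] : T ⊗[k] (T ⊗[k] T) →ₗ[k] T :=
  (LinearMap.mul' k T).comp
    (TensorProduct.map (LinearMap.id : T →ₗ[k] T) (LinearMap.mul' k T))

/-- multiplication of four factors. -/
def mul₄ (T : Type*) [Ring T] [Algebra k T] :
    T ⊗[k] (T ⊗[k] (T ⊗[k] T)) →ₗ[k] T :=
  (LinearMap.mul' k T).comp
    (TensorProduct.map (LinearMap.id : T →ₗ[k] T) (mul₃ k T))

/-- The left hand side `h_{1'} ⊗ h_{2'1} ⊗ h_{2'2}` of the Hopf brace compatibility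
condition (2.1), i.e. `(id ⊗ Δ) ∘ Δ'`. -/
def braceLHS (H : Type*) [Ring H] [Algebra k H] (Δ Δ' : H →ₗ[k] H ⊗[k] H) :
    H →ₗ[k] H ⊗[k] (H ⊗[k] H) :=
  (TensorProduct.map (LinearMap.id : H →ₗ[k] H) Δ).comp Δ'

/-- The right hand side `h_{11'}S(h_2)h_{31'} ⊗ h_{12'} ⊗ h_{32'}` of the Hopf brace
compatibility condition (2.1):  it is obtained from the twofold comultiplication
`h ↦ h_1 ⊗ (h_2 ⊗ h_3)` (using `Δ`) by applying `Δ'` to the first and third legs,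
`S` to the middle leg, placing the results in the appropriate tensor positions of
`H ⊗ (H ⊗ H)` (filled with `1`s) and multiplying. -/
def braceRHS (H : Type*) [Ring H] [Algebra k H] (Δ Δ' : H →ₗ[k] H ⊗[k] H)
    (S : H →ₗ[k] H) : H →ₗ[k] H ⊗[k] (H ⊗[k] H) :=
  (mul₃ k (H ⊗[k] (H ⊗[k] H))).comp
    ((TensorProduct.map
        ((TensorProduct.map (LinearMap.id : H →ₗ[k] H) (ι₁ k H H)).comp Δ')
        (TensorProduct.map ((ι₁ k H (H ⊗[k] H)).comp S)
          ((TensorProduct.map (LinearMap.id : H →ₗ[k] H) (ι₂ k H H)).comp Δ'))).comp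
      ((TensorProduct.map (LinearMap.id : H →ₗ[k] H) Δ).comp Δ))

/-- A Hopf brace on the `k`-algebra `H` : two Hopf algebra structures sharing the
multiplication and unit of `H`, subject to the compatibility condition (2.1):
`h_{1'} ⊗ h_{2'1} ⊗ h_{2'2} = h_{11'}S(h_2)h_{31'} ⊗ h_{12'} ⊗ h_{32'}`. -/
structure HopfBrace (H : Type*) [Ring H] [Algebra k H] where
  fst : HopfStruct k H
  snd : HopfStruct k H
  compat : ∀ h : H,
    braceLHS k H fst.Δ snd.Δ h = braceRHS k H fst.Δ snd.Δ fst.S h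

/-- The coaction `ρ(h) = S(h_1) h_{21'} ⊗ h_{22'}` of Lemma 2.5. -/
def ρmap (H : Type*) [Ring H] [Algebra k H] (Δ Δ' : H →ₗ[k] H ⊗[k] H)
    (S : H →ₗ[k] H) : H →ₗ[k] H ⊗[k] H :=
  (LinearMap.mul' k (H ⊗[k] H)).comp
    ((TensorProduct.map ((ι₁ k H H).comp S) Δ').comp Δ)

/-- The coaction `φ(a) = (T(a_{1'}))_{(-1)} a_{2'} ⊗ (T(a_{1'}))_{(0)} a_{3'}`
of Lemma 2.8(2), where `x_{(-1)} ⊗ x_{(0)} = ρ(x)`. -/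
def φmap (H : Type*) [Ring H] [Algebra k H] (Δ Δ' : H →ₗ[k] H ⊗[k] H)
    (S T : H →ₗ[k] H) : H →ₗ[k] H ⊗[k] H :=
  (LinearMap.mul' k (H ⊗[k] H)).comp
    ((TensorProduct.map ((ρmap k H Δ Δ' S).comp T)
        (LinearMap.id : H ⊗[k] H →ₗ[k] H ⊗[k] H)).comp
      ((TensorProduct.map (LinearMap.id : H →ₗ[k] H) Δ').comp Δ'))

/-- `ρ : A →ₗ H ⊗ A` is a coassociative counital left coaction of the coalgebra
`(H, ΔH, εH)`. -/
def LeftCoaction (A H : Type*) [Ring A] [Algebra k A] [Ring H] [Algebra k H]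
    (ΔH : H →ₗ[k] H ⊗[k] H) (εH : H →ₗ[k] k) (ρ : A →ₗ[k] H ⊗[k] A) : Prop :=
  (∀ a : A,
    TensorProduct.map (LinearMap.id : H →ₗ[k] H) ρ (ρ a)
      = TensorProduct.assoc k H H A
          (TensorProduct.map ΔH (LinearMap.id : A →ₗ[k] A) (ρ a))) ∧
  (∀ a : A,
    TensorProduct.lid k A (TensorProduct.map εH (LinearMap.id : A →ₗ[k] A) (ρ a)) = a)

/-- `φ : H →ₗ H ⊗ A` is a coassociative counital right coaction of the coalgebra
`(A, ΔA, εA)`. -/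
def RightCoaction (A H : Type*) [Ring A] [Algebra k A] [Ring H] [Algebra k H]
    (ΔA : A →ₗ[k] A ⊗[k] A) (εA : A →ₗ[k] k) (φ : H →ₗ[k] H ⊗[k] A) : Prop :=
  (∀ h : H,
    TensorProduct.map (LinearMap.id : H →ₗ[k] H) ΔA (φ h)
      = TensorProduct.assoc k H A A
          (TensorProduct.map φ (LinearMap.id : A →ₗ[k] A) (φ h))) ∧
  (∀ h : H,
    TensorProduct.rid k H (TensorProduct.map (LinearMap.id : H →ₗ[k] H) εA (φ h)) = h)

/-- a linear map which is moreover multiplicative and unital. -/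
def IsAlgebraMorphism (M N : Type*) [Ring M] [Algebra k M] [Ring N] [Algebra k N]
    (f : M →ₗ[k] N) : Prop :=
  (∀ a b : M, f (a * b) = f a * f b) ∧ f 1 = 1

/-- `a ↦ a_{1(-1)} a_{2(-1)} ⊗ a_{1(0)} ⊗ a_{2(0)}`, the right hand side of the
comodule coalgebra condition. -/
def comodCoalgRHS (A H : Type*) [Ring A] [Algebra k A] [Ring H] [Algebra k H]
    (ΔA : A →ₗ[k] A ⊗[k] A) (ρ : A →ₗ[k] H ⊗[k] A) :
    A →ₗ[k] H ⊗[k] (A ⊗[k] A) :=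
  (LinearMap.mul' k (H ⊗[k] (A ⊗[k] A))).comp
    ((TensorProduct.map
        ((TensorProduct.map (LinearMap.id : H →ₗ[k] H) (ι₁ k A A)).comp ρ)
        ((TensorProduct.map (LinearMap.id : H →ₗ[k] H) (ι₂ k A A)).comp ρ)).comp ΔA)

/-- The two conditions making a left `H`-comodule `(A, ρ)` a comodule coalgebra:
`a_{(-1)} ⊗ Δ(a_{(0)}) = a_{1(-1)} a_{2(-1)} ⊗ a_{1(0)} ⊗ a_{2(0)}` and
`a_{(-1)} ε(a_{(0)}) = ε(a) 1`. -/
def IsComodCoalg (A H : Type*) [Ring A] [Algebra k A] [Ring H] [Algebra k H]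
    (ΔA : A →ₗ[k] A ⊗[k] A) (εA : A →ₗ[k] k) (ρ : A →ₗ[k] H ⊗[k] A) : Prop :=
  (∀ a : A,
    TensorProduct.map (LinearMap.id : H →ₗ[k] H) ΔA (ρ a)
      = comodCoalgRHS k A H ΔA ρ a) ∧
  (∀ a : A,
    TensorProduct.rid k H (TensorProduct.map (LinearMap.id : H →ₗ[k] H) εA (ρ a))
      = algebraMap k H (εA a))

/-- `a ↦ a_{1(-1)} a_{2(-1)[0]} ⊗ a_{1(0)} a_{2(-1)[1]} ⊗ a_{2(0)}`, the right hand
side of (HM2). -/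
def HM2RHS (A H : Type*) [Ring A] [Algebra k A] [Ring H] [Algebra k H]
    (ΔA : A →ₗ[k] A ⊗[k] A) (ρ : A →ₗ[k] H ⊗[k] A) (φ : H →ₗ[k] H ⊗[k] A) :
    A →ₗ[k] H ⊗[k] (A ⊗[k] A) :=
  (LinearMap.mul' k (H ⊗[k] (A ⊗[k] A))).comp
    ((TensorProduct.map
        ((TensorProduct.map (LinearMap.id : H →ₗ[k] H) (ι₁ k A A)).comp ρ)
        ((TensorProduct.assoc k H A A).toLinearMap.comp
          ((TensorProduct.map φ (LinearMap.id : A →ₗ[k] A)).comp ρ))).comp ΔA)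

/-- `h ↦ h_{1[0]} ⊗ h_{1[1](-1)} h_{2[0]} ⊗ h_{1[1](0)} h_{2[1]}`, the right hand
side of (HM3). -/
def HM3RHS (A H : Type*) [Ring A] [Algebra k A] [Ring H] [Algebra k H]
    (ΔH : H →ₗ[k] H ⊗[k] H) (ρ : A →ₗ[k] H ⊗[k] A) (φ : H →ₗ[k] H ⊗[k] A) :
    H →ₗ[k] H ⊗[k] (H ⊗[k] A) :=
  (LinearMap.mul' k (H ⊗[k] (H ⊗[k] A))).comp
    ((TensorProduct.map
        ((TensorProduct.map (LinearMap.id : H →ₗ[k] H) ρ).comp φ)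
        ((ι₂ k H (H ⊗[k] A)).comp φ)).comp ΔH)

/-- A Hopf matched pair `(A, H)` (Definition 3.1): `ρ` makes `A` a left
`H`-comodule algebra, `φ` makes `H` a right `A`-comodule algebra, and the
compatibility conditions (HM1)–(HM4) hold. -/
def IsHopfMatchedPair (A H : Type*) [Ring A] [Algebra k A] [Ring H] [Algebra k H]
    (ΔA : A →ₗ[k] A ⊗[k] A) (εA : A →ₗ[k] k)
    (ΔH : H →ₗ[k] H ⊗[k] H) (εH : H →ₗ[k] k)
    (ρ : A →ₗ[k] H ⊗[k] A) (φ : H →ₗ[k] H ⊗[k] A) : Prop :=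
  LeftCoaction k A H ΔH εH ρ ∧
  IsAlgebraMorphism k A (H ⊗[k] A) ρ ∧
  RightCoaction k A H ΔA εA φ ∧
  IsAlgebraMorphism k H (H ⊗[k] A) φ ∧
  -- (HM1)
  (∀ a : A,
    TensorProduct.rid k H (TensorProduct.map (LinearMap.id : H →ₗ[k] H) εA (ρ a))
      = algebraMap k H (εA a)) ∧
  (∀ h : H,
    TensorProduct.lid k A (TensorProduct.map εH (LinearMap.id : A →ₗ[k] A) (φ h))
      = algebraMap k A (εH h)) ∧
  -- (HM2)
  (∀ a : A,
    TensorProduct.map (LinearMap.id : H →ₗ[k] H) ΔA (ρ a) = HM2RHS k A H ΔA ρ φ a) ∧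
  -- (HM3)
  (∀ h : H,
    TensorProduct.assoc k H H A
        (TensorProduct.map ΔH (LinearMap.id : A →ₗ[k] A) (φ h))
      = HM3RHS k A H ΔH ρ φ h) ∧
  -- (HM4)
  (∀ (a : A) (h : H), φ h * ρ a = ρ a * φ h)

/-- Equation (3.2): `Δ(a) = a_{1'} T(a_{2'(-1)}) ⊗ a_{2'(0)}`. -/
def Δfromρ (A : Type*) [Ring A] [Algebra k A] (Δ' : A →ₗ[k] A ⊗[k] A)
    (T : A →ₗ[k] A) (ρ : A →ₗ[k] A ⊗[k] A) : A →ₗ[k] A ⊗[k] A :=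
  (LinearMap.mul' k (A ⊗[k] A)).comp
    ((TensorProduct.map (ι₁ k A A)
        ((TensorProduct.map T (LinearMap.id : A →ₗ[k] A)).comp ρ)).comp Δ')

/-- Equation (3.3): `S(a) = a_{(-1)} T(a_{(0)})`. -/
def Sfromρ (A : Type*) [Ring A] [Algebra k A] (T : A →ₗ[k] A)
    (ρ : A →ₗ[k] A ⊗[k] A) : A →ₗ[k] A :=
  (LinearMap.mul' k A).comp
    ((TensorProduct.map (LinearMap.id : A →ₗ[k] A) T).comp ρ)

/-- The comultiplication `Δ_R(h) = R · Δ(h) · R⁻¹` obtained by conjugating `Δ` with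
an invertible element `R ∈ H ⊗ H`. -/
def conjComul (H : Type*) [Ring H] [Algebra k H] (R Rinv : H ⊗[k] H)
    (Δ : H →ₗ[k] H ⊗[k] H) : H →ₗ[k] H ⊗[k] H :=
  (LinearMap.mulLeft k R).comp ((LinearMap.mulRight k Rinv).comp Δ)

/-- The braiding candidate `c(x ⊗ y) = x_{(-1)} y_{[0]} ⊗ x_{(0)} y_{[1]}` of
Proposition 2.9, i.e. `c = mult ∘ (ρ ⊗ φ)`. -/
def cmap (A : Type*) [Ring A] [Algebra k A] (Δ Δ' : A →ₗ[k] A ⊗[k] A)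
    (S T : A →ₗ[k] A) : A ⊗[k] A →ₗ[k] A ⊗[k] A :=
  (LinearMap.mul' k (A ⊗[k] A)).comp
    (TensorProduct.map (ρmap k A Δ Δ' S) (φmap k A Δ Δ' S T))

/-- `γ(x ⊗ y) = x y_{(-1)} ⊗ y_{(0)}` for a coaction `ρ(y) = y_{(-1)} ⊗ y_{(0)}`. -/
def γmap (A : Type*) [Ring A] [Algebra k A] (ρ : A →ₗ[k] A ⊗[k] A) :
    A ⊗[k] A →ₗ[k] A ⊗[k] A :=
  (LinearMap.mul' k (A ⊗[k] A)).comp (TensorProduct.map (ι₁ k A A) ρ)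

/-- `σ(x ⊗ y) = y_2 ⊗ x S(y_1) y_3`. -/
def σmap (A : Type*) [Ring A] [Algebra k A] (Δ : A →ₗ[k] A ⊗[k] A)
    (S : A →ₗ[k] A) : A ⊗[k] A →ₗ[k] A ⊗[k] A :=
  (mul₄ k (A ⊗[k] A)).comp
    ((TensorProduct.map (ι₂ k A A)
        (TensorProduct.map ((ι₂ k A A).comp S)
          (TensorProduct.map (ι₁ k A A) (ι₂ k A A)))).comp
      (TensorProduct.map (LinearMap.id : A →ₗ[k] A)
        ((TensorProduct.map (LinearMap.id : A →ₗ[k] A) Δ).comp Δ)))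

/-- The usual tensor product comultiplication `Δ̂` on `A ⊗ H`:
`a ⊗ h ↦ (a_1 ⊗ h_1) ⊗ (a_2 ⊗ h_2)`. -/
def hatΔ (A H : Type*) [Ring A] [Algebra k A] [Ring H] [Algebra k H]
    (ΔA : A →ₗ[k] A ⊗[k] A) (ΔH : H →ₗ[k] H ⊗[k] H) :
    A ⊗[k] H →ₗ[k] (A ⊗[k] H) ⊗[k] (A ⊗[k] H) :=
  (TensorProduct.tensorTensorTensorComm k A A H H).toLinearMap.comp
    (TensorProduct.map ΔA ΔH)

/-- The bicrossed coproduct comultiplication on `A ⊗ H`: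
`Δ̃(a ⊗ h) = a_1 ⊗ a_{2(-1)} h_{1[0]} ⊗ a_{2(0)} h_{1[1]} ⊗ h_2`. -/
def bicrossΔ (A H : Type*) [Ring A] [Algebra k A] [Ring H] [Algebra k H]
    (ΔA : A →ₗ[k] A ⊗[k] A) (ΔH : H →ₗ[k] H ⊗[k] H)
    (ρ : A →ₗ[k] H ⊗[k] A) (φ : H →ₗ[k] H ⊗[k] A) :
    A ⊗[k] H →ₗ[k] (A ⊗[k] H) ⊗[k] (A ⊗[k] H) :=
  (LinearMap.mul' k ((A ⊗[k] H) ⊗[k] (A ⊗[k] H))).comp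
    (TensorProduct.map
      -- a ↦ (a_1 ⊗ a_{2(-1)}) ⊗ (a_{2(0)} ⊗ 1)
      ((TensorProduct.map (LinearMap.id : A ⊗[k] H →ₗ[k] A ⊗[k] H) (ι₁ k A H)).comp
        ((TensorProduct.assoc k A H A).symm.toLinearMap.comp
          ((TensorProduct.map (LinearMap.id : A →ₗ[k] A) ρ).comp ΔA)))
      -- h ↦ (1 ⊗ h_{1[0]}) ⊗ (h_{1[1]} ⊗ h_2)
      ((TensorProduct.map (ι₂ k A H) (LinearMap.id : A ⊗[k] H →ₗ[k] A ⊗[k] H)).comp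
        ((TensorProduct.assoc k H A H).toLinearMap.comp
          ((TensorProduct.map φ (LinearMap.id : H →ₗ[k] H)).comp ΔH))))

/-- The antipode of the bicrossed coproduct:
`S̃(a ⊗ h) = S_A(h_{[1]}) S_A(a_{(0)}) ⊗ S_H(h_{[0]}) S_H(a_{(-1)})`. -/
def bicrossS (A H : Type*) [Ring A] [Algebra k A] [Ring H] [Algebra k H]
    (SA : A →ₗ[k] A) (SH : H →ₗ[k] H)
    (ρ : A →ₗ[k] H ⊗[k] A) (φ : H →ₗ[k] H ⊗[k] A) :
    A ⊗[k] H →ₗ[k] A ⊗[k] H :=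
  (LinearMap.mul' k (A ⊗[k] H)).comp
    ((TensorProduct.map
        ((TensorProduct.map SA SH).comp ((TensorProduct.comm k H A).toLinearMap.comp φ))
        ((TensorProduct.map SA SH).comp ((TensorProduct.comm k H A).toLinearMap.comp ρ))).comp
      (TensorProduct.comm k A H).toLinearMap)

/-- The left hand side `h_{[0]} ⊗ h_{[1]1} ⊗ h_{[1]2}` of equation (4.1), where the
`A`-leg is comultiplied with `Δ'`. -/
def eq41LHS (A H : Type*) [Ring A] [Algebra k A] [Ring H] [Algebra k H]
    (Δ'A : A →ₗ[k] A ⊗[k] A) (φ : H →ₗ[k] H ⊗[k] A) :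
    H →ₗ[k] H ⊗[k] (A ⊗[k] A) :=
  (TensorProduct.map (LinearMap.id : H →ₗ[k] H) Δ'A).comp φ

/-- The right hand side `h_{1[0]} S(h_2) h_{3[0]} ⊗ h_{1[1]} ⊗ h_{3[1]}` of
equation (4.1). -/
def eq41RHS (A H : Type*) [Ring A] [Algebra k A] [Ring H] [Algebra k H]
    (ΔH : H →ₗ[k] H ⊗[k] H) (SH : H →ₗ[k] H) (φ : H →ₗ[k] H ⊗[k] A) :
    H →ₗ[k] H ⊗[k] (A ⊗[k] A) :=
  (mul₃ k (H ⊗[k] (A ⊗[k] A))).comp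
    ((TensorProduct.map
        ((TensorProduct.map (LinearMap.id : H →ₗ[k] H) (ι₁ k A A)).comp φ)
        (TensorProduct.map ((ι₁ k H (A ⊗[k] A)).comp SH)
          ((TensorProduct.map (LinearMap.id : H →ₗ[k] H) (ι₂ k A A)).comp φ))).comp
      ((TensorProduct.map (LinearMap.id : H →ₗ[k] H) ΔH).comp ΔH))

/-- `x ↦ x_{11'} S(x_2) ⊗ x_{12'} ⊗ 1 ∈ H ⊗ (H ⊗ A)`, an auxiliary map for
equations (4.2) and (4.3). -/
def LHmap (A H : Type*) [Ring A] [Algebra k A] [Ring H] [Algebra k H]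
    (ΔH Δ'H : H →ₗ[k] H ⊗[k] H) (SH : H →ₗ[k] H) :
    H →ₗ[k] H ⊗[k] (H ⊗[k] A) :=
  (LinearMap.mul' k (H ⊗[k] (H ⊗[k] A))).comp
    ((TensorProduct.map
        ((TensorProduct.map (LinearMap.id : H →ₗ[k] H) (ι₁ k H A)).comp Δ'H)
        ((ι₁ k H (H ⊗[k] A)).comp SH)).comp ΔH)

/-- The right hand side
`a_{(-1)11'} S(a_{(-1)2}) a_{(0)(-1)'} ⊗ a_{(-1)12'} ⊗ a_{(0)(0)'}` of
equation (4.2). -/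
def eq42RHS (A H : Type*) [Ring A] [Algebra k A] [Ring H] [Algebra k H]
    (ΔH Δ'H : H →ₗ[k] H ⊗[k] H) (SH : H →ₗ[k] H)
    (ρ ρ' : A →ₗ[k] H ⊗[k] A) :
    A →ₗ[k] H ⊗[k] (H ⊗[k] A) :=
  (LinearMap.mul' k (H ⊗[k] (H ⊗[k] A))).comp
    ((TensorProduct.map (LHmap k A H ΔH Δ'H SH)
        ((TensorProduct.map (LinearMap.id : H →ₗ[k] H) (ι₂ k H A)).comp ρ')).comp ρ)

/-- The right hand side
`h_{1[0]11'} S(h_{1[0]2}) h_{1[1](-1)'} h_2 ⊗ h_{1[0]12'} ⊗ h_{1[1](0)'}` of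
equation (4.3). -/
def eq43RHS (A H : Type*) [Ring A] [Algebra k A] [Ring H] [Algebra k H]
    (ΔH Δ'H : H →ₗ[k] H ⊗[k] H) (SH : H →ₗ[k] H)
    (ρ' : A →ₗ[k] H ⊗[k] A) (φ : H →ₗ[k] H ⊗[k] A) :
    H →ₗ[k] H ⊗[k] (H ⊗[k] A) :=
  (LinearMap.mul' k (H ⊗[k] (H ⊗[k] A))).comp
    ((TensorProduct.map
        ((LinearMap.mul' k (H ⊗[k] (H ⊗[k] A))).comp
          ((TensorProduct.map (LHmap k A H ΔH Δ'H SH)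
              ((TensorProduct.map (LinearMap.id : H →ₗ[k] H) (ι₂ k H A)).comp ρ')).comp φ))
        (ι₁ k H (H ⊗[k] A))).comp ΔH)

/-! ### Auxiliary machinery for the proof of Lemma 2.8(1) -/

section AuxForLemma281

open TensorProduct LinearMap

variable {k}

section GenericExt

variable {M N P Q R S Z : Type*}
  [AddCommGroup M] [Module k M] [AddCommGroup N] [Module k N]
  [AddCommGroup P] [Module k P] [AddCommGroup Q] [Module k Q]
  [AddCommGroup R] [Module k R] [AddCommGroup S] [Module k S]
  [AddCommGroup Z] [Module k Z]

theorem hb_ext3 {f g : M ⊗[k] (N ⊗[k] P) →ₗ[k] Z}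
    (h : ∀ a b c, f (a ⊗ₜ (b ⊗ₜ c)) = g (a ⊗ₜ (b ⊗ₜ c))) : f = g := by
  apply TensorProduct.ext'
  intro a t
  induction t using TensorProduct.induction_on with
  | zero => simp
  | tmul b c => exact h a b c
  | add u v hu hv => simp only [tmul_add, map_add, hu, hv]

theorem hb_ext6 {f g : (M ⊗[k] (N ⊗[k] P)) ⊗[k] (Q ⊗[k] (R ⊗[k] S)) →ₗ[k] Z}
    (h : ∀ a b c d e e', f ((a ⊗ₜ (b ⊗ₜ c)) ⊗ₜ (d ⊗ₜ (e ⊗ₜ e')))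
      = g ((a ⊗ₜ (b ⊗ₜ c)) ⊗ₜ (d ⊗ₜ (e ⊗ₜ e')))) : f = g := by
  apply TensorProduct.ext_fourfold'
  intro a t d s
  induction t using TensorProduct.induction_on with
  | zero => simp
  | tmul b c =>
    induction s using TensorProduct.induction_on with
    | zero => simp
    | tmul e e' => exact h a b c d e e'
    | add u v hu hv => simp only [tmul_add, map_add, hu, hv]
  | add u v hu hv => simp only [tmul_add, add_tmul, map_add, hu, hv]

end GenericExt

section Mul1Sec

/-- a multiplicative unital linear map -/
def hb_Mul1 {M N : Type*} [Ring M] [Algebra k M] [Ring N] [Algebra k N]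
    (f : M →ₗ[k] N) : Prop :=
  (∀ x y : M, f (x * y) = f x * f y) ∧ f 1 = 1

variable {M N P Q : Type*} [Ring M] [Algebra k M] [Ring N] [Algebra k N]
  [Ring P] [Algebra k P] [Ring Q] [Algebra k Q]

theorem hb_Mul1.comp {g : N →ₗ[k] P} {f : M →ₗ[k] N} (hg : hb_Mul1 g) (hf : hb_Mul1 f) :
    hb_Mul1 (g ∘ₗ f) :=
  ⟨fun x y => by simp [hf.1, hg.1], by simp [hf.2, hg.2]⟩

theorem hb_Mul1.id : hb_Mul1 (LinearMap.id : M →ₗ[k] M) := ⟨fun _ _ => rfl, rfl⟩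

theorem hb_Mul1.algMap {f : M →ₗ[k] N} (hf : hb_Mul1 f) (r : k) :
    f (algebraMap k M r) = algebraMap k N r := by
  rw [Algebra.algebraMap_eq_smul_one, map_smul, hf.2, ← Algebra.algebraMap_eq_smul_one]

theorem hb_mul1_map {f : M →ₗ[k] N} {g : P →ₗ[k] Q} (hf : hb_Mul1 f) (hg : hb_Mul1 g) :
    hb_Mul1 (map f g) := by
  constructor
  · intro x y
    have e : (mul' k (N ⊗[k] Q) ∘ₗ map (map f g) (map f g) :
          (M ⊗[k] P) ⊗[k] (M ⊗[k] P) →ₗ[k] N ⊗[k] Q)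
        = map f g ∘ₗ mul' k (M ⊗[k] P) :=
      TensorProduct.ext_fourfold' fun a b c d => by
        simp [LinearMap.mul'_apply, Algebra.TensorProduct.tmul_mul_tmul, hf.1, hg.1]
    have h2 := DFunLike.congr_fun e (x ⊗ₜ y)
    simpa [LinearMap.mul'_apply] using h2.symm
  · simp [Algebra.TensorProduct.one_def, hf.2, hg.2]

theorem hb_i1_apply (x : M) : ι₁ k M N x = x ⊗ₜ 1 := rfl

theorem hb_i2_apply (x : N) : ι₂ k M N x = 1 ⊗ₜ x := rfl

theorem hb_mul1_i1 : hb_Mul1 (ι₁ k M N) :=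
  ⟨fun x y => by simp [hb_i1_apply, Algebra.TensorProduct.tmul_mul_tmul],
   by simp [hb_i1_apply, Algebra.TensorProduct.one_def]⟩

theorem hb_mul1_i2 : hb_Mul1 (ι₂ k M N) :=
  ⟨fun x y => by simp [hb_i2_apply, Algebra.TensorProduct.tmul_mul_tmul],
   by simp [hb_i2_apply, Algebra.TensorProduct.one_def]⟩

theorem hb_i1_alg : (ι₁ k M N) ∘ₗ Algebra.linearMap k M = Algebra.linearMap k (M ⊗[k] N) :=
  LinearMap.ext fun r => by
    simp [hb_i1_apply, Algebra.TensorProduct.algebraMap_apply]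

theorem hb_mul1_assoc : hb_Mul1 ((TensorProduct.assoc k M N P).toLinearMap) := by
  have h : ∀ x, (TensorProduct.assoc k M N P).toLinearMap x
      = Algebra.TensorProduct.assoc k k k M N P x := by
    intro x
    rfl
  exact ⟨fun x y => by rw [h, h, h, map_mul], by rw [h, map_one]⟩

end Mul1Sec

section CnvSec

variable {C B B' : Type*} [AddCommGroup C] [Module k C]
  [Ring B] [Algebra k B] [Ring B'] [Algebra k B']

/-- convolution product of two linear maps with respect to a comultiplication `ΔC` -/
def hb_cnv (ΔC : C →ₗ[k] C ⊗[k] C) (f g : C →ₗ[k] B) : C →ₗ[k] B :=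
  mul' k B ∘ₗ map f g ∘ₗ ΔC

theorem hb_cnv_apply (ΔC : C →ₗ[k] C ⊗[k] C) (f g : C →ₗ[k] B) (x : C) :
    hb_cnv ΔC f g x = mul' k B (map f g (ΔC x)) := rfl

theorem hb_comp_cnv (ΔC : C →ₗ[k] C ⊗[k] C) {h : B →ₗ[k] B'} (hh : hb_Mul1 h)
    (f g : C →ₗ[k] B) : h ∘ₗ hb_cnv ΔC f g = hb_cnv ΔC (h ∘ₗ f) (h ∘ₗ g) := by
  apply LinearMap.ext; intro a
  have e : (h ∘ₗ (mul' k B ∘ₗ map f g) : C ⊗[k] C →ₗ[k] B')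
      = mul' k B' ∘ₗ map (h ∘ₗ f) (h ∘ₗ g) :=
    TensorProduct.ext' fun x y => by simp [LinearMap.mul'_apply, hh.1]
  have h2 := DFunLike.congr_fun e (ΔC a)
  simpa [hb_cnv, LinearMap.mul'_apply] using h2

theorem hb_cnv_unit_left (ΔC : C →ₗ[k] C ⊗[k] C) (εC : C →ₗ[k] k)
    (hcl : ∀ x, TensorProduct.lid k C (map εC LinearMap.id (ΔC x)) = x)
    (f : C →ₗ[k] B) : hb_cnv ΔC (Algebra.linearMap k B ∘ₗ εC) f = f := by
  apply LinearMap.ext; intro a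
  have e : (mul' k B ∘ₗ map (Algebra.linearMap k B ∘ₗ εC) f : C ⊗[k] C →ₗ[k] B)
      = f ∘ₗ ((TensorProduct.lid k C).toLinearMap ∘ₗ map εC LinearMap.id) :=
    TensorProduct.ext' fun x y => by
      simp [LinearMap.mul'_apply, Algebra.smul_def]
  have h2 := DFunLike.congr_fun e (ΔC a)
  simp only [LinearMap.coe_comp, Function.comp_apply, LinearEquiv.coe_coe] at h2
  rw [hb_cnv_apply, h2, hcl a]

theorem hb_cnv_assoc (ΔC : C →ₗ[k] C ⊗[k] C)
    (hco : ∀ x, TensorProduct.assoc k C C C (map ΔC LinearMap.id (ΔC x))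
      = map LinearMap.id ΔC (ΔC x))
    (f g h : C →ₗ[k] B) :
    hb_cnv ΔC (hb_cnv ΔC f g) h = hb_cnv ΔC f (hb_cnv ΔC g h) := by
  apply LinearMap.ext; intro a
  have e1 : (mul' k B ∘ₗ map (hb_cnv ΔC f g) h : C ⊗[k] C →ₗ[k] B)
      = (mul' k B ∘ₗ map (mul' k B ∘ₗ map f g) h) ∘ₗ map ΔC LinearMap.id :=
    TensorProduct.ext' fun x y => by simp [hb_cnv_apply, LinearMap.mul'_apply]
  have e2 : (mul' k B ∘ₗ map (mul' k B ∘ₗ map f g) h : (C ⊗[k] C) ⊗[k] C →ₗ[k] B)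
      = (mul' k B ∘ₗ map f (mul' k B ∘ₗ map g h)) ∘ₗ (TensorProduct.assoc k C C C).toLinearMap :=
    TensorProduct.ext_threefold fun x y z => by
      simp [LinearMap.mul'_apply, mul_assoc]
  have e3 : (mul' k B ∘ₗ map f (hb_cnv ΔC g h) : C ⊗[k] C →ₗ[k] B)
      = (mul' k B ∘ₗ map f (mul' k B ∘ₗ map g h)) ∘ₗ map LinearMap.id ΔC :=
    TensorProduct.ext' fun x y => by simp [hb_cnv_apply, LinearMap.mul'_apply]
  have h1 := DFunLike.congr_fun e1 (ΔC a)
  have h2 := DFunLike.congr_fun e2 (map ΔC LinearMap.id (ΔC a))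
  have h3 := DFunLike.congr_fun e3 (ΔC a)
  simp only [LinearMap.coe_comp, Function.comp_apply, LinearEquiv.coe_coe] at h1 h2 h3
  rw [hb_cnv_apply, hb_cnv_apply, h1, h2, hco a, ← h3]

theorem hb_cnv_cancel (ΔC : C →ₗ[k] C ⊗[k] C) (εC : C →ₗ[k] k)
    (hco : ∀ x, TensorProduct.assoc k C C C (map ΔC LinearMap.id (ΔC x))
      = map LinearMap.id ΔC (ΔC x))
    (hcl : ∀ x, TensorProduct.lid k C (map εC LinearMap.id (ΔC x)) = x)
    {w' w f g : C →ₗ[k] B}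
    (hw : hb_cnv ΔC w' w = Algebra.linearMap k B ∘ₗ εC)
    (hfg : hb_cnv ΔC w f = hb_cnv ΔC w g) : f = g := by
  have h1 : ∀ u : C →ₗ[k] B, hb_cnv ΔC (hb_cnv ΔC w' w) u = u := by
    intro u; rw [hw]; exact hb_cnv_unit_left ΔC εC hcl u
  calc f = hb_cnv ΔC (hb_cnv ΔC w' w) f := (h1 f).symm
    _ = hb_cnv ΔC w' (hb_cnv ΔC w f) := hb_cnv_assoc ΔC hco w' w f
    _ = hb_cnv ΔC w' (hb_cnv ΔC w g) := by rw [hfg]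
    _ = hb_cnv ΔC (hb_cnv ΔC w' w) g := (hb_cnv_assoc ΔC hco w' w g).symm
    _ = g := h1 g

end CnvSec

end AuxForLemma281


section AuxHopfFacts

open TensorProduct LinearMap

variable {k}
variable {A : Type*} [Ring A] [Algebra k A] (HS : HopfStruct k A)

theorem hb_S_one : HS.S 1 = 1 := by
  have h := HS.antipode_left 1
  rw [HS.comul_one, Algebra.TensorProduct.one_def] at h
  simpa [LinearMap.mul'_apply, HS.counit_one] using h

theorem hb_cnv_antipode_right {B : Type*} [Ring B] [Algebra k B] {g : A →ₗ[k] B}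
    (hg : hb_Mul1 g) :
    hb_cnv HS.Δ g (g ∘ₗ HS.S) = Algebra.linearMap k B ∘ₗ HS.ε := by
  apply LinearMap.ext; intro a
  have e : (mul' k B ∘ₗ map g (g ∘ₗ HS.S) : A ⊗[k] A →ₗ[k] B)
      = g ∘ₗ (mul' k A ∘ₗ map LinearMap.id HS.S) :=
    TensorProduct.ext' fun x y => by simp [LinearMap.mul'_apply, hg.1]
  have h2 := DFunLike.congr_fun e (HS.Δ a)
  simp only [LinearMap.coe_comp, Function.comp_apply] at h2
  rw [hb_cnv_apply, h2, HS.antipode_right a, hg.algMap]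
  simp

theorem hb_cnv_antipode_left {B : Type*} [Ring B] [Algebra k B] {g : A →ₗ[k] B}
    (hg : hb_Mul1 g) :
    hb_cnv HS.Δ (g ∘ₗ HS.S) g = Algebra.linearMap k B ∘ₗ HS.ε := by
  apply LinearMap.ext; intro a
  have e : (mul' k B ∘ₗ map (g ∘ₗ HS.S) g : A ⊗[k] A →ₗ[k] B)
      = g ∘ₗ (mul' k A ∘ₗ map HS.S LinearMap.id) :=
    TensorProduct.ext' fun x y => by simp [LinearMap.mul'_apply, hg.1]
  have h2 := DFunLike.congr_fun e (HS.Δ a)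
  simp only [LinearMap.coe_comp, Function.comp_apply] at h2
  rw [hb_cnv_apply, h2, HS.antipode_left a, hg.algMap]
  simp

/-- applying a multiplicative functional to the first tensor leg is multiplicative -/
theorem hb_mul1_lidmap {N : Type*} [Ring N] [Algebra k N] {μ : A →ₗ[k] k}
    (hμ : hb_Mul1 μ) :
    hb_Mul1 ((TensorProduct.lid k N).toLinearMap ∘ₗ map μ LinearMap.id :
      A ⊗[k] N →ₗ[k] N) := by
  constructor
  · intro x y
    have e : (mul' k N ∘ₗ map ((TensorProduct.lid k N).toLinearMap ∘ₗ map μ LinearMap.id)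
          ((TensorProduct.lid k N).toLinearMap ∘ₗ map μ LinearMap.id) :
          (A ⊗[k] N) ⊗[k] (A ⊗[k] N) →ₗ[k] N)
        = ((TensorProduct.lid k N).toLinearMap ∘ₗ map μ LinearMap.id) ∘ₗ mul' k (A ⊗[k] N) :=
      TensorProduct.ext_fourfold' fun a t b s => by
        simp only [map_tmul, LinearMap.coe_comp, Function.comp_apply, LinearEquiv.coe_coe,
          lid_tmul, LinearMap.mul'_apply, Algebra.TensorProduct.tmul_mul_tmul,
          LinearMap.id_coe, id_eq]
        rw [hμ.1, smul_mul_assoc, mul_smul_comm, mul_smul]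
    have h2 := DFunLike.congr_fun e (x ⊗ₜ y)
    simpa [LinearMap.mul'_apply] using h2.symm
  · simp [Algebra.TensorProduct.one_def, hμ.2]

end AuxHopfFacts


section AuxMain

open TensorProduct LinearMap

variable {k}
variable {A : Type*} [Ring A] [Algebra k A] (HB : HopfBrace k A)

/-- the coaction `ρ` of Lemma 2.5, as a convolution product -/
def hb_rr : A →ₗ[k] A ⊗[k] A := ρmap k A HB.fst.Δ HB.snd.Δ HB.fst.S

theorem hb_rr_eq :
    hb_rr HB = hb_cnv HB.fst.Δ (ι₁ k A A ∘ₗ HB.fst.S) HB.snd.Δ := rfl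

theorem hb_hcoA : ∀ x, TensorProduct.assoc k A A A
    (map HB.fst.Δ LinearMap.id (HB.fst.Δ x)) = map LinearMap.id HB.fst.Δ (HB.fst.Δ x) :=
  fun x => (HB.fst.coassoc x).symm

theorem hb_commT2 (hcomm : ∀ x y : A, x * y = y * x) :
    ∀ x y : A ⊗[k] A, x * y = y * x := by
  intro x y
  induction x using TensorProduct.induction_on with
  | zero => simp
  | add u v hu hv => simp [add_mul, mul_add, hu, hv]
  | tmul a b =>
    induction y using TensorProduct.induction_on with
    | zero => simp
    | add u v hu hv => simp [add_mul, mul_add, hu, hv]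
    | tmul c d => simp [Algebra.TensorProduct.tmul_mul_tmul, hcomm a c, hcomm b d]

theorem hb_mmmc (hcomm : ∀ x y : A, x * y = y * x) (p q r s : A ⊗[k] A) :
    (p * q) * (r * s) = (p * r) * (q * s) := by
  calc (p * q) * (r * s) = p * (q * (r * s)) := mul_assoc _ _ _
    _ = p * ((q * r) * s) := by rw [← mul_assoc q r s]
    _ = p * ((r * q) * s) := by rw [hb_commT2 hcomm q r]
    _ = p * (r * (q * s)) := by rw [mul_assoc r q s]
    _ = (p * r) * (q * s) := (mul_assoc p r (q * s)).symm

theorem hb_rr_one : hb_rr HB 1 = 1 := by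
  have h1 : HB.fst.Δ (1 : A) = (1 : A) ⊗ₜ[k] 1 := by
    rw [HB.fst.comul_one, Algebra.TensorProduct.one_def]
  show mul' k (A ⊗[k] A) (map (ι₁ k A A ∘ₗ HB.fst.S) HB.snd.Δ (HB.fst.Δ (1:A))) = 1
  rw [h1]
  simp [hb_i1_apply, hb_S_one, HB.snd.comul_one, LinearMap.mul'_apply,
    Algebra.TensorProduct.one_def]

theorem hb_E2 : hb_cnv HB.fst.Δ (ι₁ k A A) (hb_rr HB) = HB.snd.Δ := by
  rw [hb_rr_eq, ← hb_cnv_assoc HB.fst.Δ (hb_hcoA HB)]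
  have h4 : hb_cnv HB.fst.Δ (ι₁ k A A) (ι₁ k A A ∘ₗ HB.fst.S)
      = Algebra.linearMap k (A ⊗[k] A) ∘ₗ HB.fst.ε := by
    have h6 := hb_comp_cnv HB.fst.Δ (hb_mul1_i1 (M := A) (N := A)) LinearMap.id HB.fst.S
    rw [LinearMap.comp_id] at h6
    rw [← h6]
    have h7 := hb_cnv_antipode_right HB.fst (hb_Mul1.id (M := A))
    rw [LinearMap.id_comp] at h7
    rw [h7, ← LinearMap.comp_assoc, hb_i1_alg]
  rw [h4, hb_cnv_unit_left HB.fst.Δ HB.fst.ε HB.fst.counit_left]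

/-- the tensor–square comultiplication `Δ_C(a ⊗ b) = (a₁ ⊗ b₁) ⊗ (a₂ ⊗ b₂)` -/
def hb_DC : A ⊗[k] A →ₗ[k] (A ⊗[k] A) ⊗[k] (A ⊗[k] A) :=
  (tensorTensorTensorComm k A A A A).toLinearMap ∘ₗ map HB.fst.Δ HB.fst.Δ

/-- the tensor–square counit `ε_C(a ⊗ b) = ε(ab)` -/
def hb_eC : A ⊗[k] A →ₗ[k] k := HB.fst.ε ∘ₗ mul' k A

theorem hb_DC_tmul (a b : A) :
    hb_DC HB (a ⊗ₜ b)
      = tensorTensorTensorComm k A A A A (HB.fst.Δ a ⊗ₜ HB.fst.Δ b) := by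
  simp [hb_DC]

theorem hb_CL4 : (map (mul' k A) (mul' k A) ∘ₗ
      (tensorTensorTensorComm k A A A A).toLinearMap :
      (A ⊗[k] A) ⊗[k] (A ⊗[k] A) →ₗ[k] A ⊗[k] A)
    = mul' k (A ⊗[k] A) :=
  TensorProduct.ext_fourfold' fun a b c d => by
    simp [tensorTensorTensorComm_tmul, LinearMap.mul'_apply,
      Algebra.TensorProduct.tmul_mul_tmul]

theorem hb_MM : map (mul' k A) (mul' k A) ∘ₗ hb_DC HB = HB.fst.Δ ∘ₗ mul' k A := by
  apply TensorProduct.ext'; intro a b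
  have h1 := DFunLike.congr_fun (hb_CL4 (A := A)) (HB.fst.Δ a ⊗ₜ HB.fst.Δ b)
  simp only [LinearMap.coe_comp, Function.comp_apply, LinearEquiv.coe_coe] at h1 ⊢
  rw [hb_DC_tmul, h1, LinearMap.mul'_apply, LinearMap.mul'_apply, HB.fst.comul_mul]

theorem hb_CLm {B : Type*} [Ring B] [Algebra k B] (p q : A →ₗ[k] B) :
    hb_cnv (hb_DC HB) (p ∘ₗ mul' k A) (q ∘ₗ mul' k A)
      = hb_cnv HB.fst.Δ p q ∘ₗ mul' k A := by
  apply LinearMap.ext; intro x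
  have e : (mul' k B ∘ₗ map (p ∘ₗ mul' k A) (q ∘ₗ mul' k A) :
        (A ⊗[k] A) ⊗[k] (A ⊗[k] A) →ₗ[k] B)
      = (mul' k B ∘ₗ map p q) ∘ₗ map (mul' k A) (mul' k A) :=
    TensorProduct.ext_fourfold' fun a b c d => by simp [LinearMap.mul'_apply]
  have h1 := DFunLike.congr_fun e (hb_DC HB x)
  have h2 := DFunLike.congr_fun (hb_MM HB) x
  simp only [LinearMap.coe_comp, Function.comp_apply] at h1 h2
  rw [hb_cnv_apply, h1, h2]
  rfl

theorem hb_hclC (x : A ⊗[k] A) :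
    TensorProduct.lid k (A ⊗[k] A)
      (map (hb_eC HB) LinearMap.id (hb_DC HB x)) = x := by
  have e0 : ((TensorProduct.lid k (A ⊗[k] A)).toLinearMap ∘ₗ map (hb_eC HB) LinearMap.id ∘ₗ
        (tensorTensorTensorComm k A A A A).toLinearMap :
        (A ⊗[k] A) ⊗[k] (A ⊗[k] A) →ₗ[k] A ⊗[k] A)
      = map ((TensorProduct.lid k A).toLinearMap ∘ₗ map HB.fst.ε LinearMap.id)
            ((TensorProduct.lid k A).toLinearMap ∘ₗ map HB.fst.ε LinearMap.id) :=
    TensorProduct.ext_fourfold' fun a b c d => by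
      simp only [LinearMap.coe_comp, Function.comp_apply, LinearEquiv.coe_coe,
        tensorTensorTensorComm_tmul, map_tmul, LinearMap.id_coe, id_eq, lid_tmul,
        hb_eC, LinearMap.mul'_apply]
      rw [HB.fst.counit_mul, mul_comm, mul_smul, smul_tmul', tmul_smul]
  have e2 : ((TensorProduct.lid k (A ⊗[k] A)).toLinearMap ∘ₗ
        map (hb_eC HB) LinearMap.id ∘ₗ hb_DC HB) = LinearMap.id := by
    apply TensorProduct.ext'; intro a b
    have h1 := DFunLike.congr_fun e0 (HB.fst.Δ a ⊗ₜ HB.fst.Δ b)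
    simp only [LinearMap.coe_comp, Function.comp_apply, LinearEquiv.coe_coe, map_tmul,
      LinearMap.id_coe, id_eq] at h1 ⊢
    rw [hb_DC_tmul, h1, HB.fst.counit_left a, HB.fst.counit_left b]
  have h3 := DFunLike.congr_fun e2 x
  simpa using h3

theorem hb_hcoC (x : A ⊗[k] A) :
    TensorProduct.assoc k (A ⊗[k] A) (A ⊗[k] A) (A ⊗[k] A)
      (map (hb_DC HB) LinearMap.id (hb_DC HB x))
      = map LinearMap.id (hb_DC HB) (hb_DC HB x) := by
  have SH2 : (map (hb_DC HB) LinearMap.id ∘ₗ (tensorTensorTensorComm k A A A A).toLinearMap :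
        (A ⊗[k] A) ⊗[k] (A ⊗[k] A) →ₗ[k] ((A ⊗[k] A) ⊗[k] (A ⊗[k] A)) ⊗[k] (A ⊗[k] A))
      = map (tensorTensorTensorComm k A A A A).toLinearMap LinearMap.id ∘ₗ
        (tensorTensorTensorComm k (A ⊗[k] A) A (A ⊗[k] A) A).toLinearMap ∘ₗ
        map (map HB.fst.Δ LinearMap.id) (map HB.fst.Δ LinearMap.id) :=
    TensorProduct.ext_fourfold' fun a x b y => by
      simp [tensorTensorTensorComm_tmul, hb_DC_tmul]
  have SH3 : (map LinearMap.id (hb_DC HB) ∘ₗ (tensorTensorTensorComm k A A A A).toLinearMap :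
        (A ⊗[k] A) ⊗[k] (A ⊗[k] A) →ₗ[k] (A ⊗[k] A) ⊗[k] ((A ⊗[k] A) ⊗[k] (A ⊗[k] A)))
      = map LinearMap.id (tensorTensorTensorComm k A A A A).toLinearMap ∘ₗ
        (tensorTensorTensorComm k A (A ⊗[k] A) A (A ⊗[k] A)).toLinearMap ∘ₗ
        map (map LinearMap.id HB.fst.Δ) (map LinearMap.id HB.fst.Δ) :=
    TensorProduct.ext_fourfold' fun a x b y => by
      simp [tensorTensorTensorComm_tmul, hb_DC_tmul]
  have SH4 : ((TensorProduct.assoc k (A ⊗[k] A) (A ⊗[k] A) (A ⊗[k] A)).toLinearMap ∘ₗ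
        map (tensorTensorTensorComm k A A A A).toLinearMap LinearMap.id ∘ₗ
        (tensorTensorTensorComm k (A ⊗[k] A) A (A ⊗[k] A) A).toLinearMap ∘ₗ
        map (TensorProduct.assoc k A A A).symm.toLinearMap
            (TensorProduct.assoc k A A A).symm.toLinearMap :
        (A ⊗[k] (A ⊗[k] A)) ⊗[k] (A ⊗[k] (A ⊗[k] A)) →ₗ[k]
          (A ⊗[k] A) ⊗[k] ((A ⊗[k] A) ⊗[k] (A ⊗[k] A)))
      = map LinearMap.id (tensorTensorTensorComm k A A A A).toLinearMap ∘ₗ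
        (tensorTensorTensorComm k A (A ⊗[k] A) A (A ⊗[k] A)).toLinearMap :=
    by
      refine hb_ext6 (k := k) (Z := (A ⊗[k] A) ⊗[k] ((A ⊗[k] A) ⊗[k] (A ⊗[k] A)))
        fun a p q b r s => ?_
      simp [tensorTensorTensorComm_tmul, assoc_tmul, assoc_symm_tmul]
  have e : ((TensorProduct.assoc k (A ⊗[k] A) (A ⊗[k] A) (A ⊗[k] A)).toLinearMap ∘ₗ
        map (hb_DC HB) LinearMap.id ∘ₗ hb_DC HB)
      = map LinearMap.id (hb_DC HB) ∘ₗ hb_DC HB := by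
    apply TensorProduct.ext'; intro a b
    have h2 := DFunLike.congr_fun SH2 (HB.fst.Δ a ⊗ₜ HB.fst.Δ b)
    have h3 := DFunLike.congr_fun SH3 (HB.fst.Δ a ⊗ₜ HB.fst.Δ b)
    have h4 := DFunLike.congr_fun SH4
      ((map LinearMap.id HB.fst.Δ (HB.fst.Δ a)) ⊗ₜ (map LinearMap.id HB.fst.Δ (HB.fst.Δ b)))
    simp only [LinearMap.coe_comp, Function.comp_apply, LinearEquiv.coe_coe, map_tmul,
      LinearMap.id_coe, id_eq] at h2 h3 h4 ⊢
    rw [hb_DC_tmul, h2, h3]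
    have hca : map HB.fst.Δ LinearMap.id (HB.fst.Δ a)
        = (TensorProduct.assoc k A A A).symm (map LinearMap.id HB.fst.Δ (HB.fst.Δ a)) := by
      rw [LinearEquiv.eq_symm_apply]; exact (HB.fst.coassoc a).symm
    have hcb : map HB.fst.Δ LinearMap.id (HB.fst.Δ b)
        = (TensorProduct.assoc k A A A).symm (map LinearMap.id HB.fst.Δ (HB.fst.Δ b)) := by
      rw [LinearEquiv.eq_symm_apply]; exact (HB.fst.coassoc b).symm
    rw [hca, hcb, h4]
  have h5 := DFunLike.congr_fun e x
  simpa using h5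


theorem hb_W'W : hb_cnv (hb_DC HB) ((ι₁ k A A ∘ₗ HB.fst.S) ∘ₗ mul' k A) (ι₁ k A A ∘ₗ mul' k A)
    = Algebra.linearMap k (A ⊗[k] A) ∘ₗ hb_eC HB := by
  rw [hb_CLm]
  have h5 : hb_cnv HB.fst.Δ (ι₁ k A A ∘ₗ HB.fst.S) (ι₁ k A A)
      = Algebra.linearMap k (A ⊗[k] A) ∘ₗ HB.fst.ε := by
    have h6 := hb_comp_cnv HB.fst.Δ (hb_mul1_i1 (M := A) (N := A)) HB.fst.S LinearMap.id
    rw [LinearMap.comp_id] at h6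
    rw [← h6]
    have h7 := hb_cnv_antipode_left HB.fst (hb_Mul1.id (M := A))
    rw [LinearMap.id_comp] at h7
    rw [h7, ← LinearMap.comp_assoc, hb_i1_alg]
  rw [h5, LinearMap.comp_assoc]
  rfl

theorem hb_hX : hb_cnv (hb_DC HB) (ι₁ k A A ∘ₗ mul' k A) (hb_rr HB ∘ₗ mul' k A)
    = HB.snd.Δ ∘ₗ mul' k A := by
  rw [hb_CLm, hb_E2]

theorem hb_hY (hcomm : ∀ x y : A, x * y = y * x) :
    hb_cnv (hb_DC HB) (ι₁ k A A ∘ₗ mul' k A)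
      (mul' k (A ⊗[k] A) ∘ₗ map (hb_rr HB) (hb_rr HB))
    = HB.snd.Δ ∘ₗ mul' k A := by
  apply TensorProduct.ext'; intro a b
  have e : (mul' k (A ⊗[k] A) ∘ₗ map (ι₁ k A A ∘ₗ mul' k A)
        (mul' k (A ⊗[k] A) ∘ₗ map (hb_rr HB) (hb_rr HB)) ∘ₗ
        (tensorTensorTensorComm k A A A A).toLinearMap :
        (A ⊗[k] A) ⊗[k] (A ⊗[k] A) →ₗ[k] A ⊗[k] A)
      = mul' k (A ⊗[k] A) ∘ₗ map (mul' k (A ⊗[k] A) ∘ₗ map (ι₁ k A A) (hb_rr HB))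
          (mul' k (A ⊗[k] A) ∘ₗ map (ι₁ k A A) (hb_rr HB)) :=
    TensorProduct.ext_fourfold' fun x1 x2 x3 x4 => by
      simp only [LinearMap.coe_comp, Function.comp_apply, LinearEquiv.coe_coe,
        tensorTensorTensorComm_tmul, map_tmul, LinearMap.mul'_apply, hb_i1_apply]
      rw [show ((x1 * x3 : A) ⊗ₜ[k] (1 : A)) = (x1 ⊗ₜ[k] (1:A)) * (x3 ⊗ₜ[k] (1:A)) by
        simp [Algebra.TensorProduct.tmul_mul_tmul]]
      exact hb_mmmc hcomm _ _ _ _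
  have h1 := DFunLike.congr_fun e (HB.fst.Δ a ⊗ₜ HB.fst.Δ b)
  simp only [LinearMap.coe_comp, Function.comp_apply, LinearEquiv.coe_coe, map_tmul,
    LinearMap.mul'_apply] at h1 ⊢
  rw [hb_cnv_apply, hb_DC_tmul, h1]
  have h2 := DFunLike.congr_fun (hb_E2 HB) a
  have h3 := DFunLike.congr_fun (hb_E2 HB) b
  rw [hb_cnv_apply] at h2 h3
  rw [h2, h3, ← HB.snd.comul_mul]

theorem hb_rr_mul (hcomm : ∀ x y : A, x * y = y * x) :
    hb_rr HB ∘ₗ mul' k A = mul' k (A ⊗[k] A) ∘ₗ map (hb_rr HB) (hb_rr HB) :=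
  hb_cnv_cancel (hb_DC HB) (hb_eC HB) (hb_hcoC HB) (hb_hclC HB)
    (hb_W'W HB) ((hb_hX HB).trans (hb_hY HB hcomm).symm)

theorem hb_mul1_rr (hcomm : ∀ x y : A, x * y = y * x) : hb_Mul1 (hb_rr HB) := by
  constructor
  · intro x y
    have h1 := DFunLike.congr_fun (hb_rr_mul HB hcomm) (x ⊗ₜ y)
    simpa [LinearMap.mul'_apply] using h1
  · exact hb_rr_one HB


theorem hb_compat : map LinearMap.id HB.fst.Δ ∘ₗ HB.snd.Δ
    = hb_cnv HB.fst.Δ (map LinearMap.id (ι₁ k A A) ∘ₗ HB.snd.Δ)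
        (hb_cnv HB.fst.Δ (ι₁ k A (A ⊗[k] A) ∘ₗ HB.fst.S)
          (map LinearMap.id (ι₂ k A A) ∘ₗ HB.snd.Δ)) := by
  apply LinearMap.ext; intro a
  have h0 := HB.compat a
  have e : (mul₃ k (A ⊗[k] (A ⊗[k] A)) ∘ₗ
        map (map LinearMap.id (ι₁ k A A) ∘ₗ HB.snd.Δ)
          (map (ι₁ k A (A ⊗[k] A) ∘ₗ HB.fst.S)
            (map LinearMap.id (ι₂ k A A) ∘ₗ HB.snd.Δ)) ∘ₗ
        map LinearMap.id HB.fst.Δ : A ⊗[k] A →ₗ[k] A ⊗[k] (A ⊗[k] A))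
      = mul' k (A ⊗[k] (A ⊗[k] A)) ∘ₗ
        map (map LinearMap.id (ι₁ k A A) ∘ₗ HB.snd.Δ)
          (mul' k (A ⊗[k] (A ⊗[k] A)) ∘ₗ
            map (ι₁ k A (A ⊗[k] A) ∘ₗ HB.fst.S)
              (map LinearMap.id (ι₂ k A A) ∘ₗ HB.snd.Δ) ∘ₗ HB.fst.Δ) :=
    TensorProduct.ext' fun x y => by
      simp [mul₃, LinearMap.mul'_apply]
  have h1 := DFunLike.congr_fun e (HB.fst.Δ a)
  simp only [LinearMap.coe_comp, Function.comp_apply] at h1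
  calc map LinearMap.id HB.fst.Δ (HB.snd.Δ a)
      = braceRHS k A HB.fst.Δ HB.snd.Δ HB.fst.S a := h0
    _ = _ := by
      show mul₃ k (A ⊗[k] (A ⊗[k] A)) (map _ (map _ _) (map LinearMap.id HB.fst.Δ (HB.fst.Δ a))) = _
      rw [h1]
      rfl

/-- the key identity `(ε' ∘ S) ⋆ id = id` -/
theorem hb_cnt : hb_cnv HB.fst.Δ (Algebra.linearMap k A ∘ₗ HB.snd.ε ∘ₗ HB.fst.S)
    LinearMap.id = LinearMap.id := by
  have hP3 := hb_mul1_lidmap (A := A) (N := A ⊗[k] A)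
    (⟨HB.snd.counit_mul, HB.snd.counit_one⟩ : hb_Mul1 HB.snd.ε)
  have hQ := hb_mul1_lidmap (A := A) (N := A)
    (⟨HB.fst.counit_mul, HB.fst.counit_one⟩ : hb_Mul1 HB.fst.ε)
  -- Step A : Δ = ι₁ ⋆ ((η₂ ∘ ε' ∘ S) ⋆ ι₂)
  have hA : HB.fst.Δ = hb_cnv HB.fst.Δ (ι₁ k A A)
      (hb_cnv HB.fst.Δ (Algebra.linearMap k (A ⊗[k] A) ∘ₗ HB.snd.ε ∘ₗ HB.fst.S)
        (ι₂ k A A)) := by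
    have hL : ((TensorProduct.lid k (A ⊗[k] A)).toLinearMap ∘ₗ map HB.snd.ε LinearMap.id) ∘ₗ
        (map LinearMap.id HB.fst.Δ ∘ₗ HB.snd.Δ) = HB.fst.Δ := by
      apply LinearMap.ext; intro a
      have e : ((TensorProduct.lid k (A ⊗[k] A)).toLinearMap ∘ₗ map HB.snd.ε LinearMap.id) ∘ₗ
            map LinearMap.id HB.fst.Δ
          = HB.fst.Δ ∘ₗ ((TensorProduct.lid k A).toLinearMap ∘ₗ map HB.snd.ε LinearMap.id) :=
        TensorProduct.ext' fun x y => by simp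
      have h2 := DFunLike.congr_fun e (HB.snd.Δ a)
      simp only [LinearMap.coe_comp, Function.comp_apply, LinearEquiv.coe_coe] at h2 ⊢
      rw [h2, HB.snd.counit_left a]
    have hw1 : ((TensorProduct.lid k (A ⊗[k] A)).toLinearMap ∘ₗ map HB.snd.ε LinearMap.id) ∘ₗ
        (map LinearMap.id (ι₁ k A A) ∘ₗ HB.snd.Δ) = ι₁ k A A := by
      apply LinearMap.ext; intro a
      have e : ((TensorProduct.lid k (A ⊗[k] A)).toLinearMap ∘ₗ map HB.snd.ε LinearMap.id) ∘ₗ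
            map LinearMap.id (ι₁ k A A)
          = ι₁ k A A ∘ₗ ((TensorProduct.lid k A).toLinearMap ∘ₗ map HB.snd.ε LinearMap.id) :=
        TensorProduct.ext' fun x y => by
          simp [hb_i1_apply, smul_tmul']
      have h2 := DFunLike.congr_fun e (HB.snd.Δ a)
      simp only [LinearMap.coe_comp, Function.comp_apply, LinearEquiv.coe_coe] at h2 ⊢
      rw [h2, HB.snd.counit_left a]
    have hw2 : ((TensorProduct.lid k (A ⊗[k] A)).toLinearMap ∘ₗ map HB.snd.ε LinearMap.id) ∘ₗ
        (ι₁ k A (A ⊗[k] A) ∘ₗ HB.fst.S)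
        = Algebra.linearMap k (A ⊗[k] A) ∘ₗ HB.snd.ε ∘ₗ HB.fst.S := by
      apply LinearMap.ext; intro a
      simp [hb_i1_apply, Algebra.algebraMap_eq_smul_one]
    have hw3 : ((TensorProduct.lid k (A ⊗[k] A)).toLinearMap ∘ₗ map HB.snd.ε LinearMap.id) ∘ₗ
        (map LinearMap.id (ι₂ k A A) ∘ₗ HB.snd.Δ) = ι₂ k A A := by
      apply LinearMap.ext; intro a
      have e : ((TensorProduct.lid k (A ⊗[k] A)).toLinearMap ∘ₗ map HB.snd.ε LinearMap.id) ∘ₗ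
            map LinearMap.id (ι₂ k A A)
          = ι₂ k A A ∘ₗ ((TensorProduct.lid k A).toLinearMap ∘ₗ map HB.snd.ε LinearMap.id) :=
        TensorProduct.ext' fun x y => by
          simp [hb_i2_apply, tmul_smul]
      have h2 := DFunLike.congr_fun e (HB.snd.Δ a)
      simp only [LinearMap.coe_comp, Function.comp_apply, LinearEquiv.coe_coe] at h2 ⊢
      rw [h2, HB.snd.counit_left a]
    calc HB.fst.Δ
        = ((TensorProduct.lid k (A ⊗[k] A)).toLinearMap ∘ₗ map HB.snd.ε LinearMap.id) ∘ₗ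
            (map LinearMap.id HB.fst.Δ ∘ₗ HB.snd.Δ) := hL.symm
      _ = ((TensorProduct.lid k (A ⊗[k] A)).toLinearMap ∘ₗ map HB.snd.ε LinearMap.id) ∘ₗ
            hb_cnv HB.fst.Δ (map LinearMap.id (ι₁ k A A) ∘ₗ HB.snd.Δ)
              (hb_cnv HB.fst.Δ (ι₁ k A (A ⊗[k] A) ∘ₗ HB.fst.S)
                (map LinearMap.id (ι₂ k A A) ∘ₗ HB.snd.Δ)) := by rw [← hb_compat HB]
      _ = _ := by
          rw [hb_comp_cnv _ hP3, hb_comp_cnv _ hP3, hw1, hw2, hw3]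
  -- Step B : apply Q = lid ∘ (ε ⊗ id)
  have hB := congrArg (fun F => ((TensorProduct.lid k A).toLinearMap ∘ₗ
    map HB.fst.ε LinearMap.id) ∘ₗ F) hA
  have hQΔ : ((TensorProduct.lid k A).toLinearMap ∘ₗ map HB.fst.ε LinearMap.id) ∘ₗ HB.fst.Δ
      = LinearMap.id := by
    apply LinearMap.ext; intro a
    simpa using HB.fst.counit_left a
  have hq1 : ((TensorProduct.lid k A).toLinearMap ∘ₗ map HB.fst.ε LinearMap.id) ∘ₗ ι₁ k A A
      = Algebra.linearMap k A ∘ₗ HB.fst.ε := by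
    apply LinearMap.ext; intro a
    simp [hb_i1_apply, Algebra.algebraMap_eq_smul_one]
  have hq2 : ((TensorProduct.lid k A).toLinearMap ∘ₗ map HB.fst.ε LinearMap.id) ∘ₗ
      (Algebra.linearMap k (A ⊗[k] A) ∘ₗ HB.snd.ε ∘ₗ HB.fst.S)
      = Algebra.linearMap k A ∘ₗ HB.snd.ε ∘ₗ HB.fst.S := by
    apply LinearMap.ext; intro a
    simp only [LinearMap.coe_comp, Function.comp_apply]
    exact hQ.algMap _
  have hq3 : ((TensorProduct.lid k A).toLinearMap ∘ₗ map HB.fst.ε LinearMap.id) ∘ₗ ι₂ k A A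
      = LinearMap.id := by
    apply LinearMap.ext; intro a
    simp [hb_i2_apply, HB.fst.counit_one]
  rw [hQΔ, hb_comp_cnv _ hQ, hb_comp_cnv _ hQ, hq1, hq2, hq3] at hB
  rw [hb_cnv_unit_left HB.fst.Δ HB.fst.ε HB.fst.counit_left] at hB
  exact hB.symm

theorem hb_counit (a : A) :
    TensorProduct.lid k A (map HB.snd.ε LinearMap.id (hb_rr HB a)) = a := by
  have hP2 := hb_mul1_lidmap (A := A) (N := A)
    (⟨HB.snd.counit_mul, HB.snd.counit_one⟩ : hb_Mul1 HB.snd.ε)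
  have h1 : ((TensorProduct.lid k A).toLinearMap ∘ₗ map HB.snd.ε LinearMap.id) ∘ₗ hb_rr HB
      = hb_cnv HB.fst.Δ (Algebra.linearMap k A ∘ₗ HB.snd.ε ∘ₗ HB.fst.S) LinearMap.id := by
    rw [hb_rr_eq, hb_comp_cnv _ hP2]
    have hu1 : ((TensorProduct.lid k A).toLinearMap ∘ₗ map HB.snd.ε LinearMap.id) ∘ₗ
        (ι₁ k A A ∘ₗ HB.fst.S) = Algebra.linearMap k A ∘ₗ HB.snd.ε ∘ₗ HB.fst.S := by
      apply LinearMap.ext; intro x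
      simp [hb_i1_apply, Algebra.algebraMap_eq_smul_one]
    have hu2 : ((TensorProduct.lid k A).toLinearMap ∘ₗ map HB.snd.ε LinearMap.id) ∘ₗ HB.snd.Δ
        = LinearMap.id := by
      apply LinearMap.ext; intro x
      simpa using HB.snd.counit_left x
    rw [hu1, hu2]
  have h2 := congrArg (fun F => F a) (h1.trans (hb_cnt HB))
  simpa using h2


/-- `ν(x ⊗ y) = (x ⊗ 1) ρ(y)` -/
def hb_nu : A ⊗[k] A →ₗ[k] A ⊗[k] A :=
  mul' k (A ⊗[k] A) ∘ₗ map (ι₁ k A A) (hb_rr HB)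

set_option maxHeartbeats 1000000 in
theorem hb_coassoc (hcomm : ∀ x y : A, x * y = y * x) (a : A) :
    map LinearMap.id (hb_rr HB) (hb_rr HB a)
      = TensorProduct.assoc k A A A (map HB.snd.Δ LinearMap.id (hb_rr HB a)) := by
  have hmw : hb_Mul1 (map LinearMap.id (ι₁ k A A) ∘ₗ HB.snd.Δ) :=
    (hb_mul1_map hb_Mul1.id hb_mul1_i1).comp ⟨HB.snd.comul_mul, HB.snd.comul_one⟩
  have hmPsi : hb_Mul1 ((TensorProduct.assoc k A A A).toLinearMap ∘ₗ
      map HB.snd.Δ LinearMap.id) :=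
    hb_mul1_assoc.comp (hb_mul1_map ⟨HB.snd.comul_mul, HB.snd.comul_one⟩ hb_Mul1.id)
  have hmPhi : hb_Mul1 (map LinearMap.id (hb_rr HB) :
      A ⊗[k] A →ₗ[k] A ⊗[k] (A ⊗[k] A)) :=
    hb_mul1_map hb_Mul1.id (hb_mul1_rr HB hcomm)
  -- G = (w ∘ S) ⋆ K
  have hG : ((TensorProduct.assoc k A A A).toLinearMap ∘ₗ map HB.snd.Δ LinearMap.id) ∘ₗ
      hb_rr HB
      = hb_cnv HB.fst.Δ ((map LinearMap.id (ι₁ k A A) ∘ₗ HB.snd.Δ) ∘ₗ HB.fst.S)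
          (map LinearMap.id HB.snd.Δ ∘ₗ HB.snd.Δ) := by
    rw [hb_rr_eq, hb_comp_cnv _ hmPsi]
    have e : (TensorProduct.assoc k A A A).toLinearMap ∘ₗ ι₁ k (A ⊗[k] A) A
        = map LinearMap.id (ι₁ k A A) :=
      TensorProduct.ext' fun p q => by simp [hb_i1_apply, assoc_tmul]
    have hPsii1 : ((TensorProduct.assoc k A A A).toLinearMap ∘ₗ map HB.snd.Δ LinearMap.id) ∘ₗ
        (ι₁ k A A ∘ₗ HB.fst.S)
        = (map LinearMap.id (ι₁ k A A) ∘ₗ HB.snd.Δ) ∘ₗ HB.fst.S := by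
      apply LinearMap.ext; intro x
      have h2 := DFunLike.congr_fun e (HB.snd.Δ (HB.fst.S x))
      simp only [LinearMap.coe_comp, Function.comp_apply] at h2 ⊢
      rw [← h2]
      simp [hb_i1_apply]
    have hPsid : ((TensorProduct.assoc k A A A).toLinearMap ∘ₗ map HB.snd.Δ LinearMap.id) ∘ₗ
        HB.snd.Δ = map LinearMap.id HB.snd.Δ ∘ₗ HB.snd.Δ := by
      apply LinearMap.ext; intro x
      simpa using (HB.snd.coassoc x).symm
    rw [hPsii1, hPsid]
  -- F = (jS) ⋆ ((id ⊗ ρ) ∘ Δ')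
  have hF : (map LinearMap.id (hb_rr HB) : A ⊗[k] A →ₗ[k] A ⊗[k] (A ⊗[k] A)) ∘ₗ hb_rr HB
      = hb_cnv HB.fst.Δ (ι₁ k A (A ⊗[k] A) ∘ₗ HB.fst.S)
          (map LinearMap.id (hb_rr HB) ∘ₗ HB.snd.Δ) := by
    have h4 := hb_comp_cnv HB.fst.Δ hmPhi (ι₁ k A A ∘ₗ HB.fst.S) HB.snd.Δ
    have h3 : (map LinearMap.id (hb_rr HB) : A ⊗[k] A →ₗ[k] A ⊗[k] (A ⊗[k] A)) ∘ₗ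
        (ι₁ k A A ∘ₗ HB.fst.S) = ι₁ k A (A ⊗[k] A) ∘ₗ HB.fst.S := by
      apply LinearMap.ext; intro x
      simp [hb_i1_apply, hb_rr_one]
    rw [h3] at h4
    exact h4
  -- I3
  have I3 : ∀ (y : A) (t : A ⊗[k] A),
      hb_nu HB ((y ⊗ₜ[k] (1:A)) * t) = (y ⊗ₜ[k] (1:A)) * hb_nu HB t := by
    intro y t
    induction t using TensorProduct.induction_on with
    | zero => simp
    | tmul p q =>
      simp only [hb_nu, LinearMap.coe_comp, Function.comp_apply,
        Algebra.TensorProduct.tmul_mul_tmul, one_mul, map_tmul, LinearMap.mul'_apply,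
        hb_i1_apply]
      rw [← mul_assoc, Algebra.TensorProduct.tmul_mul_tmul, mul_one]
    | add u v hu hv => simp only [mul_add, map_add, hu, hv]
  -- I1
  have I1 : ∀ (y : A) (u : A ⊗[k] A),
      ((y ⊗ₜ[k] (1 : A ⊗[k] A)) * map LinearMap.id (hb_rr HB) u : A ⊗[k] (A ⊗[k] A))
        = map LinearMap.id (hb_nu HB) ((y ⊗ₜ[k] (1 : A ⊗[k] A)) * map LinearMap.id (ι₂ k A A) u) := by
    intro y u
    induction u using TensorProduct.induction_on with
    | zero => simp
    | tmul p q =>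
      simp only [map_tmul, LinearMap.id_coe, id_eq, Algebra.TensorProduct.tmul_mul_tmul,
        one_mul, hb_i2_apply]
      congr 1
      simp only [hb_nu, LinearMap.coe_comp, Function.comp_apply, map_tmul,
        LinearMap.mul'_apply, hb_i1_apply]
      rw [← Algebra.TensorProduct.one_def, one_mul]
    | add u v hu hv => simp only [map_add, mul_add, hu, hv]
  -- I2
  have I2 : ∀ (u : A ⊗[k] A) (v : A ⊗[k] (A ⊗[k] A)),
      (map LinearMap.id (ι₁ k A A) u) * (map LinearMap.id (hb_nu HB) v)
        = map LinearMap.id (hb_nu HB) ((map LinearMap.id (ι₁ k A A) u) * v) := by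
    intro u v
    induction u using TensorProduct.induction_on with
    | zero => simp
    | tmul x y =>
      induction v using TensorProduct.induction_on with
      | zero => simp
      | tmul c t =>
        simp only [map_tmul, LinearMap.id_coe, id_eq, hb_i1_apply,
          Algebra.TensorProduct.tmul_mul_tmul]
        rw [I3]
      | add u' v' hu hv => simp only [map_add, mul_add, hu, hv]
    | add u' v' hu hv => simp only [map_add, add_mul, hu, hv]
  -- LΩ
  have hLΩ : hb_cnv HB.fst.Δ (ι₁ k A (A ⊗[k] A) ∘ₗ HB.fst.S)
        (map LinearMap.id (hb_rr HB) ∘ₗ HB.snd.Δ)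
      = map LinearMap.id (hb_nu HB) ∘ₗ
        hb_cnv HB.fst.Δ (ι₁ k A (A ⊗[k] A) ∘ₗ HB.fst.S)
          (map LinearMap.id (ι₂ k A A) ∘ₗ HB.snd.Δ) := by
    apply LinearMap.ext; intro x
    have e : (mul' k (A ⊗[k] (A ⊗[k] A)) ∘ₗ map (ι₁ k A (A ⊗[k] A) ∘ₗ HB.fst.S)
          (map LinearMap.id (hb_rr HB) ∘ₗ HB.snd.Δ) : A ⊗[k] A →ₗ[k] A ⊗[k] (A ⊗[k] A))
        = map LinearMap.id (hb_nu HB) ∘ₗ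
          (mul' k (A ⊗[k] (A ⊗[k] A)) ∘ₗ map (ι₁ k A (A ⊗[k] A) ∘ₗ HB.fst.S)
            (map LinearMap.id (ι₂ k A A) ∘ₗ HB.snd.Δ)) :=
      TensorProduct.ext' fun p z => by
        simpa [hb_i1_apply, LinearMap.mul'_apply] using I1 (HB.fst.S p) (HB.snd.Δ z)
    have h1 := DFunLike.congr_fun e (HB.fst.Δ x)
    simpa [hb_cnv, LinearMap.mul'_apply] using h1
  -- LΩ'
  have hLΩ' : ∀ H : A →ₗ[k] A ⊗[k] (A ⊗[k] A),
      hb_cnv HB.fst.Δ (map LinearMap.id (ι₁ k A A) ∘ₗ HB.snd.Δ)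
          (map LinearMap.id (hb_nu HB) ∘ₗ H)
        = map LinearMap.id (hb_nu HB) ∘ₗ
          hb_cnv HB.fst.Δ (map LinearMap.id (ι₁ k A A) ∘ₗ HB.snd.Δ) H := by
    intro H
    apply LinearMap.ext; intro x
    have e : (mul' k (A ⊗[k] (A ⊗[k] A)) ∘ₗ
          map (map LinearMap.id (ι₁ k A A) ∘ₗ HB.snd.Δ) (map LinearMap.id (hb_nu HB) ∘ₗ H) :
          A ⊗[k] A →ₗ[k] A ⊗[k] (A ⊗[k] A))
        = map LinearMap.id (hb_nu HB) ∘ₗ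
          (mul' k (A ⊗[k] (A ⊗[k] A)) ∘ₗ
            map (map LinearMap.id (ι₁ k A A) ∘ₗ HB.snd.Δ) H) :=
      TensorProduct.ext' fun p z => by
        simpa [LinearMap.mul'_apply] using I2 (HB.snd.Δ p) (H z)
    have h1 := DFunLike.congr_fun e (HB.fst.Δ x)
    simpa [hb_cnv, LinearMap.mul'_apply] using h1
  -- E5
  have hE5 : map LinearMap.id (hb_nu HB) ∘ₗ (map LinearMap.id HB.fst.Δ ∘ₗ HB.snd.Δ)
      = map LinearMap.id HB.snd.Δ ∘ₗ HB.snd.Δ := by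
    have hνδ : hb_nu HB ∘ₗ HB.fst.Δ = HB.snd.Δ := hb_E2 HB
    calc map LinearMap.id (hb_nu HB) ∘ₗ (map LinearMap.id HB.fst.Δ ∘ₗ HB.snd.Δ)
        = (map LinearMap.id (hb_nu HB) ∘ₗ map LinearMap.id HB.fst.Δ) ∘ₗ HB.snd.Δ := rfl
      _ = map (LinearMap.id ∘ₗ LinearMap.id) (hb_nu HB ∘ₗ HB.fst.Δ) ∘ₗ HB.snd.Δ := by
          rw [TensorProduct.map_comp]
      _ = map LinearMap.id HB.snd.Δ ∘ₗ HB.snd.Δ := by rw [hνδ, LinearMap.id_comp]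
  -- the key cancellation
  have hKey : hb_cnv HB.fst.Δ (map LinearMap.id (ι₁ k A A) ∘ₗ HB.snd.Δ)
        ((map LinearMap.id (hb_rr HB) : A ⊗[k] A →ₗ[k] A ⊗[k] (A ⊗[k] A)) ∘ₗ hb_rr HB)
      = hb_cnv HB.fst.Δ (map LinearMap.id (ι₁ k A A) ∘ₗ HB.snd.Δ)
        (((TensorProduct.assoc k A A A).toLinearMap ∘ₗ map HB.snd.Δ LinearMap.id) ∘ₗ
          hb_rr HB) := by
    rw [hF, hG, hLΩ, hLΩ', ← hb_compat HB, hE5]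
    rw [← hb_cnv_assoc HB.fst.Δ (hb_hcoA HB)]
    rw [hb_cnv_antipode_right HB.fst hmw]
    rw [hb_cnv_unit_left HB.fst.Δ HB.fst.ε HB.fst.counit_left]
  have hfinal : (map LinearMap.id (hb_rr HB) : A ⊗[k] A →ₗ[k] A ⊗[k] (A ⊗[k] A)) ∘ₗ hb_rr HB
      = ((TensorProduct.assoc k A A A).toLinearMap ∘ₗ map HB.snd.Δ LinearMap.id) ∘ₗ
        hb_rr HB :=
    hb_cnv_cancel HB.fst.Δ HB.fst.ε (hb_hcoA HB) HB.fst.counit_left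
      (hb_cnv_antipode_left HB.fst hmw) hKey
  have h9 := DFunLike.congr_fun hfinal a
  simpa using h9


end AuxMain


/-- Lemma 2.8(1).  Let `(A, Δ, Δ')` be a commutative Hopf
brace with antipode `S` for `Δ`.  Then `ρ(a) = S(a_1) a_{21'} ⊗ a_{22'}` makes
`A` a left comodule algebra over `(A, Δ')`: `ρ` is a coassociative counital
left `(A, Δ')`-coaction and an algebra homomorphism (in particular
`ρ(ab) = ρ(a) ρ(b)` and `ρ(1) = 1 ⊗ 1`). -/
theorem lemma_2_8_1 {k : Type*} [Field k] {A : Type*} [Ring A] [Algebra k A]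
    (HB : HopfBrace k A) (hcomm : ∀ x y : A, x * y = y * x) :
    LeftCoaction k A A HB.snd.Δ HB.snd.ε
        (ρmap k A HB.fst.Δ HB.snd.Δ HB.fst.S) ∧
    IsAlgebraMorphism k A (A ⊗[k] A)
        (ρmap k A HB.fst.Δ HB.snd.Δ HB.fst.S) := by
  constructor
  · constructor
    · intro a
      exact hb_coassoc HB hcomm a
    · intro a
      exact hb_counit HB a
  · constructor
    · intro a b
      show hb_rr HB (a * b) = hb_rr HB a * hb_rr HB b
      have h1 := DFunLike.congr_fun (hb_rr_mul HB hcomm) (a ⊗ₜ b)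
      simpa [LinearMap.mul'_apply] using h1
    · exact hb_rr_one HB

end HopfPaper
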